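/- For any δ > 0, setting M = ⌈1/δ⌉ + 1, there exist coefficients {(a_j, w_j, b_j)}_{j∈[M]} with |a_j| ≤ 2, |w_j| ≤ 1, |b_j| ≤ log M, such that the function exp_δ(x) = Σ_{j=1}^M a_j · ReLU(w_j x + b_j) satisfies: exp_δ is non-decreasing on (-∞, 0], sup_{x ≤ 0} |exp(x) - exp_δ(x)| ≤ δ, and exp_δ(0) = 1. -/

import Mathlib

open Real Finset

noncomputable def sig (n m : ℕ) : ℝ := (((n:ℝ)+1) * (Real.log ((m:ℝ)+1) - Real.log (m:ℝ)))⁻¹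

lemma clamp_eq (y Δ : ℝ) (hΔ : 0 ≤ Δ) :
    max y 0 - max (y - Δ) 0 = min (max y 0) Δ := by
  rcases le_total y 0 with h | h <;> rcases le_total y Δ with h2 | h2 <;>
    simp [max_eq_left, max_eq_right, min_eq_left, min_eq_right, *] <;> linarith

lemma logpos {m : ℕ} (hm : 1 ≤ m) : 0 < Real.log ((m:ℝ)+1) - Real.log (m:ℝ) := by
  have h1 : (0:ℝ) < m := by exact_mod_cast hm
  have := Real.log_lt_log h1 (by linarith : (m:ℝ) < (m:ℝ)+1)
  linarith

lemma loggap {m : ℕ} (hm : 1 ≤ m) : ((m:ℝ)+1)⁻¹ ≤ Real.log ((m:ℝ)+1) - Real.log (m:ℝ) := by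
  have h1 : (0:ℝ) < m := by exact_mod_cast hm
  have h2 : (0:ℝ) < (m:ℝ)/((m:ℝ)+1) := by positivity
  have h3 := Real.log_le_sub_one_of_pos h2
  rw [Real.log_div (by positivity) (by positivity)] at h3
  have h4 : (m:ℝ)/((m:ℝ)+1) - 1 = -((m:ℝ)+1)⁻¹ := by field_simp; ring
  linarith

lemma loganti {m : ℕ} (hm : 1 ≤ m) :
    Real.log ((m:ℝ)+1+1) - Real.log ((m:ℝ)+1) ≤ Real.log ((m:ℝ)+1) - Real.log (m:ℝ) := by
  have h1 : (0:ℝ) < m := by exact_mod_cast hm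
  have h2 : ((m:ℝ)+1+1) * m ≤ ((m:ℝ)+1) * ((m:ℝ)+1) := by nlinarith
  have h3 := Real.log_le_log (by positivity) h2
  rw [Real.log_mul (by positivity) (by positivity), Real.log_mul (by positivity) (by positivity)] at h3
  linarith

lemma sig_zero (n : ℕ) : sig n 0 = 0 := by simp [sig]

lemma sig_nonneg (n m : ℕ) : 0 ≤ sig n m := by
  rcases Nat.eq_zero_or_pos m with h | h
  · simp [h, sig_zero]
  · exact inv_nonneg.mpr (mul_nonneg (by positivity) (logpos h).le)

lemma sig_le_one {n m : ℕ} (hm : m ≤ n) : sig n m ≤ 1 := by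
  rcases Nat.eq_zero_or_pos m with h | h
  · simp [h, sig_zero]
  · have h1 := loggap h
    have h2 : (0:ℝ) ≤ ((m:ℝ)+1)⁻¹ := by positivity
    have h3 : ((m:ℝ)+1) * ((m:ℝ)+1)⁻¹ = 1 := by
      rw [mul_inv_cancel₀]; positivity
    have hmn : (m:ℝ) ≤ n := by exact_mod_cast hm
    have h4 : 1 ≤ ((n:ℝ)+1) * (Real.log ((m:ℝ)+1) - Real.log (m:ℝ)) := by nlinarith
    rw [sig]
    exact inv_le_one_of_one_le₀ h4

lemma sig_mono (n : ℕ) (m : ℕ) : sig n m ≤ sig n (m+1) := by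
  rcases Nat.eq_zero_or_pos m with h | h
  · simp [h, sig_zero, sig_nonneg]
  · have h1 := logpos (m := m+1) (by omega)
    push_cast at h1
    have h2 := loganti h
    rw [sig, sig]
    push_cast
    apply inv_anti₀
    · nlinarith
    · nlinarith [logpos h]

lemma key (n : ℕ) (x : ℝ) (hx : x ≤ 0) :
    Real.exp x ≤ 1/((n:ℝ)+1) + ∑ i ∈ range n,
        (sig n (i+1) - sig n i) * max (x + Real.log ((n:ℝ)+1) - Real.log ((i:ℝ)+1)) 0
    ∧ 1/((n:ℝ)+1) + ∑ i ∈ range n,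
        (sig n (i+1) - sig n i) * max (x + Real.log ((n:ℝ)+1) - Real.log ((i:ℝ)+1)) 0
      ≤ (min (((n:ℝ)+1)*Real.exp x) n + 1) / ((n:ℝ)+1) := by
  have hn1 : (0:ℝ) < (n:ℝ)+1 := by positivity
  set u := ((n:ℝ)+1) * Real.exp x with hu
  have hu0 : 0 < u := by positivity
  have hun : u ≤ (n:ℝ)+1 := by
    have := Real.exp_le_one_iff.mpr hx
    nlinarith [Real.exp_pos x]
  set r : ℕ → ℝ := fun k => max (x + Real.log ((n:ℝ)+1) - Real.log (k:ℝ)) 0 with hr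
  set c : ℕ → ℝ := fun i => min (max (x + Real.log ((n:ℝ)+1) - Real.log ((i:ℝ)+1)) 0)
      (Real.log ((i:ℝ)+1+1) - Real.log ((i:ℝ)+1)) with hcdef
  -- the sum in the statement is ∑ (sig (i+1) - sig i) * r (i+1)
  have hrterm : ∀ i : ℕ, r (i+1) = max (x + Real.log ((n:ℝ)+1) - Real.log ((i:ℝ)+1)) 0 := by
    intro i; simp only [hr]; push_cast; rfl
  have hΔpos : ∀ i : ℕ, 0 < Real.log ((i:ℝ)+1+1) - Real.log ((i:ℝ)+1) := by
    intro i
    have := logpos (m := i+1) (by omega)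
    push_cast at this; exact this
  have hσ : ∀ i : ℕ, sig n (i+1) = (((n:ℝ)+1) * (Real.log ((i:ℝ)+1+1) - Real.log ((i:ℝ)+1)))⁻¹ := by
    intro i; rw [sig]; push_cast; rfl
  have hc0 : ∀ i : ℕ, 0 ≤ c i := by
    intro i; simp only [hcdef]
    exact le_min (le_max_right _ _) (hΔpos i).le
  have hcΔ : ∀ i : ℕ, c i ≤ Real.log ((i:ℝ)+1+1) - Real.log ((i:ℝ)+1) := fun i => min_le_right _ _
  have hσΔ : ∀ i : ℕ, sig n (i+1) * (Real.log ((i:ℝ)+1+1) - Real.log ((i:ℝ)+1)) = ((n:ℝ)+1)⁻¹ := by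
    intro i
    rw [hσ i, mul_inv]
    field_simp [(hΔpos i).ne']
  have hci : ∀ i : ℕ, c i = r (i+1) - r (i+1+1) := by
    intro i
    have e2 : r (i+1+1) = max ((x + Real.log ((n:ℝ)+1) - Real.log ((i:ℝ)+1))
        - (Real.log ((i:ℝ)+1+1) - Real.log ((i:ℝ)+1))) 0 := by
      simp only [hr]; push_cast; congr 1; ring
    rw [hrterm i, e2, clamp_eq _ _ (hΔpos i).le]
  -- Abel summation
  set f : ℕ → ℝ := fun k => sig n k * r (k+1) with hf
  have hrn : r (n+1) = 0 := by
    simp only [hr]; push_cast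
    rw [show x + Real.log ((n:ℝ)+1) - Real.log ((n:ℝ)+1) = x by ring]
    exact max_eq_right hx
  have hS : ∑ i ∈ range n, (sig n (i+1) - sig n i) * max (x + Real.log ((n:ℝ)+1) - Real.log ((i:ℝ)+1)) 0
      = ∑ i ∈ range n, sig n (i+1) * c i := by
    have hterm : ∀ i ∈ range n, (sig n (i+1) - sig n i) * max (x + Real.log ((n:ℝ)+1) - Real.log ((i:ℝ)+1)) 0
        = sig n (i+1) * c i + (f (i+1) - f i) := by
      intro i _
      rw [← hrterm i, hci i]
      simp only [hf]
      ring
    rw [Finset.sum_congr rfl hterm, Finset.sum_add_distrib, Finset.sum_range_sub f n]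
    simp only [hf]
    rw [hrn, sig_zero]
    ring
  rw [hS]
  -- per-term bounds
  set F : ℕ → ℝ := fun k => min u (k:ℝ) / ((n:ℝ)+1) with hF
  set G : ℕ → ℝ := fun k => min u ((k:ℝ)+1) / ((n:ℝ)+1) with hG
  have hUp : ∀ i ∈ range n, sig n (i+1) * c i ≤ F (i+1) - F i := by
    intro i _
    have hσc1 : sig n (i+1) * c i ≤ ((n:ℝ)+1)⁻¹ := by
      calc sig n (i+1) * c i ≤ sig n (i+1) * (Real.log ((i:ℝ)+1+1) - Real.log ((i:ℝ)+1)) :=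
            mul_le_mul_of_nonneg_left (hcΔ i) (sig_nonneg n (i+1))
        _ = ((n:ℝ)+1)⁻¹ := hσΔ i
    simp only [hF]
    push_cast
    rcases le_or_gt ((i:ℝ)+1) u with h | h
    · rw [min_eq_right h]
      have h2 : min u (i:ℝ) ≤ (i:ℝ) := min_le_right _ _
      have h3 : ((n:ℝ)+1)⁻¹ ≤ (((i:ℝ)+1) - min u (i:ℝ)) / ((n:ℝ)+1) := by
        rw [inv_eq_one_div]
        gcongr
        linarith
      calc sig n (i+1) * c i ≤ ((n:ℝ)+1)⁻¹ := hσc1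
        _ ≤ _ := by rw [sub_div] at h3; linarith
    · have h5 : Real.exp x < ((i:ℝ)+1)/((n:ℝ)+1) := by
        rw [lt_div_iff₀ hn1]; nlinarith [hu]
      have h6 : x < Real.log ((i:ℝ)+1) - Real.log ((n:ℝ)+1) := by
        have := Real.log_lt_log (Real.exp_pos x) h5
        rwa [Real.log_exp, Real.log_div (by positivity) (by positivity)] at this
      have h7 : c i = 0 := by
        simp only [hcdef]
        rw [max_eq_right (by linarith), min_eq_left (hΔpos i).le]
      rw [h7, mul_zero]
      have h8 : min u (i:ℝ) ≤ min u ((i:ℝ)+1) := min_le_min_left u (by linarith)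
      have h9 : min u (i:ℝ)/((n:ℝ)+1) ≤ min u ((i:ℝ)+1)/((n:ℝ)+1) := by gcongr
      linarith
  have hLo : ∀ i ∈ range n, G (i+1) - G i ≤ sig n (i+1) * c i := by
    intro i _
    simp only [hG]
    push_cast
    rcases le_or_gt u ((i:ℝ)+1) with h | h
    · rw [min_eq_left h, min_eq_left (by linarith : u ≤ (i:ℝ)+1+1), sub_self]
      exact mul_nonneg (sig_nonneg n (i+1)) (hc0 i)
    · rcases le_or_gt ((i:ℝ)+1+1) u with h2 | h2
      · have h5 : ((i:ℝ)+1+1)/((n:ℝ)+1) ≤ Real.exp x := by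
          rw [div_le_iff₀ hn1]; nlinarith [hu]
        have h6 : Real.log ((i:ℝ)+1+1) - Real.log ((n:ℝ)+1) ≤ x := by
          have := Real.log_le_log (by positivity) h5
          rwa [Real.log_exp, Real.log_div (by positivity) (by positivity)] at this
        have h7 : c i = Real.log ((i:ℝ)+1+1) - Real.log ((i:ℝ)+1) := by
          simp only [hcdef]
          rw [max_eq_left (by linarith [hΔpos i]), min_eq_right (by linarith)]
        rw [h7, hσΔ i, min_eq_right h.le]
        have h8 : min u ((i:ℝ)+1+1) ≤ (i:ℝ)+1+1 := min_le_right _ _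
        rw [inv_eq_one_div]
        rw [div_sub_div_same]
        gcongr (?_) / _
        linarith
      · -- convexity case
        set p := Real.log ((i:ℝ)+1) - Real.log ((n:ℝ)+1) with hp
        set Δ := Real.log ((i:ℝ)+1+1) - Real.log ((i:ℝ)+1) with hΔd
        have hΔp : 0 < Δ := hΔpos i
        have hq' : Real.log ((i:ℝ)+1+1) - Real.log ((n:ℝ)+1) = p + Δ := by
          rw [hp, hΔd]; ring
        have hpx : p < x := by
          have h5 : ((i:ℝ)+1)/((n:ℝ)+1) < Real.exp x := by
            rw [div_lt_iff₀ hn1]; nlinarith [hu]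
          have h6 := Real.log_lt_log (by positivity) h5
          rw [Real.log_exp, Real.log_div (by positivity) (by positivity)] at h6
          rw [hp]; exact h6
        have hxq : x < p + Δ := by
          have h5 : Real.exp x < ((i:ℝ)+1+1)/((n:ℝ)+1) := by
            rw [lt_div_iff₀ hn1]; nlinarith [hu]
          have h6 := Real.log_lt_log (Real.exp_pos x) h5
          rw [Real.log_exp, Real.log_div (by positivity) (by positivity)] at h6
          rw [hp, hΔd]; linarith
        have hxp : x + Real.log ((n:ℝ)+1) - Real.log ((i:ℝ)+1) = x - p := by
          rw [hp]; ring
        have hc8 : c i = x - p := by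
          simp only [hcdef, ← hΔd]
          rw [hxp, max_eq_left (by linarith), min_eq_left (by linarith)]
        have hA : 0 ≤ (p + Δ - x)/Δ := div_nonneg (by linarith) hΔp.le
        have hB : 0 ≤ (x - p)/Δ := div_nonneg (by linarith) hΔp.le
        have hAB : (p + Δ - x)/Δ + (x - p)/Δ = 1 := by
          rw [← add_div, show p + Δ - x + (x - p) = Δ by ring]
          exact div_self hΔp.ne'
        have hcx := convexOn_exp.2 (Set.mem_univ p) (Set.mem_univ (p + Δ)) hA hB hAB
        simp only [smul_eq_mul] at hcx
        rw [show (p + Δ - x)/Δ * p + (x - p)/Δ * (p + Δ) = x by field_simp; ring] at hcx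
        have hep : Real.exp p = ((i:ℝ)+1)/((n:ℝ)+1) := by
          rw [hp, Real.exp_sub, Real.exp_log (by positivity), Real.exp_log (by positivity)]
        have heq2 : Real.exp (p + Δ) = ((i:ℝ)+1+1)/((n:ℝ)+1) := by
          rw [← hq', Real.exp_sub, Real.exp_log (by positivity), Real.exp_log (by positivity)]
        rw [hep, heq2] at hcx
        have hcomb : (p + Δ - x)/Δ * (((i:ℝ)+1)/((n:ℝ)+1)) + (x - p)/Δ * (((i:ℝ)+1+1)/((n:ℝ)+1))
            = (((i:ℝ)+1) + (x - p)/Δ) / ((n:ℝ)+1) := by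
          field_simp
          ring
        rw [hcomb] at hcx
        have hcx2 : ((n:ℝ)+1) * Real.exp x ≤ ((i:ℝ)+1) + (x - p)/Δ := by
          rw [← le_div_iff₀' hn1]
          exact hcx
        rw [min_eq_left h2.le, min_eq_right h.le, hc8, hσ i, ← hΔd]
        have hrw : (((n:ℝ)+1) * Δ)⁻¹ * (x - p) = ((x - p)/Δ) / ((n:ℝ)+1) := by
          rw [mul_inv]; ring
        rw [hrw, div_sub_div_same]
        gcongr (?_) / _
        rw [hu]
        linarith
  -- assemble
  have h1 : ∑ i ∈ range n, sig n (i+1) * c i ≤ F n - F 0 := by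
    calc ∑ i ∈ range n, sig n (i+1) * c i ≤ ∑ i ∈ range n, (F (i+1) - F i) :=
          Finset.sum_le_sum hUp
      _ = F n - F 0 := Finset.sum_range_sub F n
  have h2 : G n - G 0 ≤ ∑ i ∈ range n, sig n (i+1) * c i := by
    calc G n - G 0 = ∑ i ∈ range n, (G (i+1) - G i) := (Finset.sum_range_sub G n).symm
      _ ≤ _ := Finset.sum_le_sum hLo
  have hF0 : F 0 = 0 := by
    simp only [hF]
    rw [Nat.cast_zero, min_eq_right hu0.le, zero_div]
  have hFn : F n = min u n / ((n:ℝ)+1) := by simp only [hF]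
  have hGn : G n = u / ((n:ℝ)+1) := by
    simp only [hG]; rw [min_eq_left hun]
  have hG0 : G 0 = min u 1 / ((n:ℝ)+1) := by
    simp only [hG]; rw [Nat.cast_zero, zero_add]
  constructor
  · have hm1 : min u 1 ≤ 1 := min_le_right _ _
    have hgd : min u 1 / ((n:ℝ)+1) ≤ 1 / ((n:ℝ)+1) := by gcongr
    have hux : u / ((n:ℝ)+1) = Real.exp x := by
      rw [hu]; field_simp
    rw [hGn, hG0, hux] at h2
    linarith
  · rw [hFn, hF0] at h1
    have : (min u ↑n + 1) / ((n:ℝ)+1) = min u ↑n / ((n:ℝ)+1) + 1/((n:ℝ)+1) := by ring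
    rw [this]
    linarith

/-- ReLU approximation of the exponential function on `(-∞, 0]`: for any `δ > 0`,
with `M = ⌈1/δ⌉ + 1` neurons, there is a one-hidden-layer ReLU network
`exp_δ(x) = ∑ j, a j * ReLU (w j * x + b j)` with `|a j| ≤ 2`, `|w j| ≤ 1`,
`|b j| ≤ log M`, which is non-decreasing on `(-∞, 0]`, approximates `exp` to error `δ`
on `(-∞, 0]`, and satisfies `exp_δ(0) = 1`. -/
theorem stmt_5 (δ : ℝ) (hδ : 0 < δ) :
    ∃ a w b : Fin (⌈1/δ⌉₊ + 1) → ℝ,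
      (∀ j, |a j| ≤ 2 ∧ |w j| ≤ 1 ∧ |b j| ≤ Real.log (⌈1/δ⌉₊ + 1)) ∧
      MonotoneOn (fun x : ℝ => ∑ j, a j * max (w j * x + b j) 0) (Set.Iic 0) ∧
      (∀ x : ℝ, x ≤ 0 → |Real.exp x - ∑ j, a j * max (w j * x + b j) 0| ≤ δ) ∧
      (∑ j, a j * max (w j * 0 + b j) 0) = 1 := by
  set n : ℕ := ⌈1/δ⌉₊ with hndef
  have hn : 1 ≤ n := Nat.ceil_pos.mpr (by positivity)
  have hn1 : (0:ℝ) < (n:ℝ)+1 := by positivity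
  have hnR : (1:ℝ) ≤ (n:ℝ) := by exact_mod_cast hn
  set A : Fin (n+1) → ℝ := Fin.cons 2 (fun i : Fin n => sig n ((i:ℕ)+1) - sig n (i:ℕ)) with hA
  set W : Fin (n+1) → ℝ := Fin.cons 0 (fun _ => 1) with hW
  set B : Fin (n+1) → ℝ :=
    Fin.cons (1/(2*((n:ℝ)+1))) (fun i : Fin n => Real.log ((n:ℝ)+1) - Real.log ((i:ℝ)+1)) with hB
  have hsum : ∀ y : ℝ, ∑ j : Fin (n+1), A j * max (W j * y + B j) 0
      = 1/((n:ℝ)+1) + ∑ i ∈ range n,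
          (sig n (i+1) - sig n i) * max (y + Real.log ((n:ℝ)+1) - Real.log ((i:ℝ)+1)) 0 := by
    intro y
    rw [Fin.sum_univ_succ]
    simp only [hA, hW, hB, Fin.cons_zero, Fin.cons_succ]
    congr 1
    · rw [zero_mul, zero_add, max_eq_left (by positivity)]
      field_simp
    · rw [← Fin.sum_univ_eq_sum_range
        (fun k => (sig n (k+1) - sig n k) * max (y + Real.log ((n:ℝ)+1) - Real.log ((k:ℝ)+1)) 0) n]
      apply Finset.sum_congr rfl
      intro i _
      congr 1
      congr 1
      ring
  refine ⟨A, W, B, ?_, ?_, ?_, ?_⟩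
  case _ =>
    -- coefficient bounds
    intro j
    simp only [hA, hW, hB]
    refine Fin.cases ?_ ?_ j
    · refine ⟨by simp, by simp, ?_⟩
      simp only [Fin.cons_zero]
      rw [abs_of_nonneg (by positivity)]
      have h2 : Real.log 2 ≤ Real.log ((n:ℝ)+1) :=
        Real.log_le_log (by norm_num) (by linarith)
      have h3 := Real.log_two_gt_d9
      have hq : 1/(2*((n:ℝ)+1)) ≤ 1/4 := by
        rw [div_le_div_iff₀ (by positivity) (by norm_num)]
        nlinarith
      linarith
    · intro i
      simp only [Fin.cons_succ]
      have hi1 : (i:ℕ)+1 ≤ n := i.isLt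
      have hi0 : (i:ℕ) ≤ n := by omega
      refine ⟨?_, by simp, ?_⟩
      · rw [abs_le]
        constructor
        · have := sig_nonneg n ((i:ℕ)+1)
          have := sig_le_one hi0
          linarith
        · have := sig_le_one hi1
          have := sig_nonneg n (i:ℕ)
          linarith
      · have hl0 : 0 ≤ Real.log ((i:ℝ)+1) := Real.log_nonneg (by
          have : (0:ℝ) ≤ (i:ℝ) := Nat.cast_nonneg _
          linarith)
        have hl1 : Real.log ((i:ℝ)+1) ≤ Real.log ((n:ℝ)+1) := by
          apply Real.log_le_log (by positivity)
          have : ((i:ℕ):ℝ) ≤ (n:ℝ) := by exact_mod_cast hi0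
          linarith
        rw [abs_le]
        constructor <;> linarith
  case _ =>
    -- monotone
    apply Monotone.monotoneOn
    intro x y hxy
    apply Finset.sum_le_sum
    intro j _
    simp only [hA, hW, hB]
    refine Fin.cases ?_ ?_ j
    · simp only [Fin.cons_zero, zero_mul]
      exact le_refl _
    · intro i
      simp only [Fin.cons_succ, one_mul]
      have ha : 0 ≤ sig n ((i:ℕ)+1) - sig n (i:ℕ) := by
        have := sig_mono n (i:ℕ)
        linarith
      exact mul_le_mul_of_nonneg_left
        (max_le_max (by linarith) le_rfl) ha
  case _ =>
    intro x hx
    obtain ⟨hl, hr⟩ := key n x hx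
    rw [hsum x]
    have hceil : 1/δ ≤ (n:ℝ) := by rw [hndef]; exact_mod_cast Nat.le_ceil (1/δ)
    have hδn : 1/((n:ℝ)+1) ≤ δ := by
      rw [div_le_iff₀ hn1]
      rw [div_le_iff₀ hδ] at hceil
      nlinarith
    have hub : (min (((n:ℝ)+1)*Real.exp x) (n:ℝ) + 1)/((n:ℝ)+1) ≤ Real.exp x + 1/((n:ℝ)+1) := by
      have he : (((n:ℝ)+1)*Real.exp x + 1)/((n:ℝ)+1) = Real.exp x + 1/((n:ℝ)+1) := by
        field_simp
      rw [← he]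
      gcongr
      exact min_le_left _ _
    rw [abs_le]
    constructor
    · linarith
    · linarith
  case _ =>
    rw [hsum 0]
    obtain ⟨hl, hr⟩ := key n 0 le_rfl
    rw [Real.exp_zero] at hl
    have h1 : min (((n:ℝ)+1)*Real.exp 0) (n:ℝ) = (n:ℝ) := by
      rw [Real.exp_zero, mul_one]
      exact min_eq_right (by linarith)
    rw [h1] at hr
    have h2 : ((n:ℝ) + 1)/((n:ℝ)+1) = 1 := div_self hn1.ne'
    rw [h2] at hr
    linarith
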